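/- Undirected token sliding reduces to directed token sliding on oriented graphs: for any undirected graph G with independent sets I⁰, Iᵗ, construct the oriented graph G' with vertex set {v₁, v₂ : v ∈ V(G)}, arcs (v₁, v₂) for each v ∈ V(G), and for each edge {u, v} ∈ E(G) the arcs (u₁, v₁), (v₁, u₂), (u₂, v₂), (v₂, u₁). Set J⁰ = {v₁ : v ∈ I⁰} and Jᵗ = {v₁ : v ∈ Iᵗ}. Then I⁰ is reconfigurable into Iᵗ in G under (undirected) token sliding if and only if J⁰ is reconfigurable into Jᵗ in G' under directed token sliding. -/

import Mathlib

open scoped Classical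

variable {V : Type*}

/-- The underlying undirected simple graph of a digraph given by its arc relation. -/
def underlying (A : V → V → Prop) : SimpleGraph V := SimpleGraph.fromRel A

/-- A polytree: a loopless digraph without antiparallel arcs whose underlying graph is a tree. -/
def IsPolytree (A : V → V → Prop) : Prop :=
  (∀ v, ¬ A v v) ∧ (∀ u v, A u v → ¬ A v u) ∧ (underlying A).IsTree

/-- `x` lies in the weakly connected component of `T - (a,b)` containing the tail `a`. -/
def InCminus (A : V → V → Prop) (a b x : V) : Prop :=
  ((underlying A).deleteEdges {s(a, b)}).Reachable a x

/-- `w((a,b); X, Y) = |C⁻ ∩ X| - |C⁻ ∩ Y|`. -/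
noncomputable def wArc [Fintype V] [DecidableEq V] (A : V → V → Prop)
    (X Y : Finset V) (a b : V) : ℤ :=
  ((X.filter fun x => InCminus A a b x).card : ℤ) -
    ((Y.filter fun x => InCminus A a b x).card : ℤ)

/-- Independence in the underlying undirected graph. -/
def IndepF (A : V → V → Prop) (I : Finset V) : Prop :=
  ∀ u ∈ I, ∀ v ∈ I, ¬ (underlying A).Adj u v

/-- One token-sliding step along an arc, in its direction. -/
def IsStep [DecidableEq V] (A : V → V → Prop) (I J : Finset V) : Prop :=
  ∃ u v, A u v ∧ I \ J = {u} ∧ J \ I = {v}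

/-- A reconfiguration sequence of independent sets under directed token sliding. -/
def IsReconfSeq [DecidableEq V] (A : V → V → Prop) {ℓ : ℕ}
    (f : Fin (ℓ + 1) → Finset V) : Prop :=
  (∀ i, IndepF A (f i)) ∧ ∀ i : Fin ℓ, IsStep A (f i.castSucc) (f i.succ)

/-- `I` is reconfigurable into `J` under directed token sliding. -/
def Reconfigurable [DecidableEq V] (A : V → V → Prop) (I J : Finset V) : Prop :=
  ∃ (ℓ : ℕ) (f : Fin (ℓ + 1) → Finset V),
    IsReconfSeq A f ∧ f 0 = I ∧ f (Fin.last ℓ) = J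

/-- A directed path in the digraph `A`, given by its (distinct) vertices in order. -/
structure DirPath (A : V → V → Prop) where
  len : ℕ
  vtx : Fin (len + 1) → V
  inj : Function.Injective vtx
  arc : ∀ i : Fin len, A (vtx i.castSucc) (vtx i.succ)

namespace DirPath
variable {A : V → V → Prop}
/-- The source of a directed path. -/
def src (p : DirPath A) : V := p.vtx 0
/-- The sink of a directed path. -/
def snk (p : DirPath A) : V := p.vtx (Fin.last p.len)
/-- The second vertex `s'(P)` of a directed path. -/
def sndVtx (p : DirPath A) : V := p.vtx ⟨min 1 p.len, by omega⟩
/-- The second-to-last vertex `t'(P)` of a directed path. -/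
def penVtx (p : DirPath A) : V := p.vtx ⟨p.len - 1, by omega⟩
/-- `v` is a vertex of the path `p`. -/
def mem (p : DirPath A) (v : V) : Prop := ∃ i, p.vtx i = v
/-- `x` is an internal vertex of `p` (neither source nor sink). -/
def internal (p : DirPath A) (x : V) : Prop :=
  ∃ i : Fin (p.len + 1), p.vtx i = x ∧ i ≠ 0 ∧ i ≠ Fin.last p.len
end DirPath

/-- A directed path matching from `X` to `Y`: distinct sources forming `X`,
distinct sinks forming `Y`. -/
def IsDPM [DecidableEq V] {A : V → V → Prop} {k : ℕ}
    (X Y : Finset V) (P : Fin k → DirPath A) : Prop :=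
  (Function.Injective fun i => (P i).src) ∧ (Function.Injective fun i => (P i).snk) ∧
  (Finset.univ.image fun i => (P i).src) = X ∧ (Finset.univ.image fun i => (P i).snk) = Y

/-- The path-set conditions (P1)–(P4). -/
def PathSetConds [DecidableEq V] {A : V → V → Prop} {k : ℕ}
    (X Y : Finset V) (P : Fin k → DirPath A) : Prop :=
  (∀ i, 2 ≤ (P i).len) ∧ IsDPM X Y P ∧
  (∀ i j, i ≠ j → (P i).sndVtx ≠ (P j).sndVtx) ∧
  (∀ i j, i ≠ j → (P i).penVtx ≠ (P j).penVtx)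

/-- Length of the (unique, when it exists) directed path from `u` to `v`. -/
noncomputable def ddist (A : V → V → Prop) (u v : V) : ℕ :=
  sInf {n | ∃ p : DirPath A, p.src = u ∧ p.snk = v ∧ p.len = n}

/-- A biased path pair: a common internal vertex `x` with
`dist(s(p),x) > dist(s(q),x)` and `dist(x,t(p)) > dist(x,t(q))`. -/
def BiasedPair (A : V → V → Prop) (p q : DirPath A) : Prop :=
  ∃ x, p.internal x ∧ q.internal x ∧
    ddist A q.src x < ddist A p.src x ∧ ddist A x q.snk < ddist A x p.snk

/-- A rigid token: `v ∈ X ∩ Y` and all incident arcs have `w`-value `0`. -/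
def RigidTok [Fintype V] [DecidableEq V] (A : V → V → Prop) (X Y : Finset V) (v : V) : Prop :=
  v ∈ X ∧ v ∈ Y ∧ ∀ a b, A a b → (a = v ∨ b = v) → wArc A X Y a b = 0

/-- A blocking arc: `w((u,v)) = 1` and every other arc incident to `u` or `v`
has `w`-value `0`. -/
def BlockingArc [Fintype V] [DecidableEq V] (A : V → V → Prop) (X Y : Finset V)
    (u v : V) : Prop :=
  A u v ∧ wArc A X Y u v = 1 ∧
    ∀ a b, A a b → (a, b) ≠ (u, v) → (a = u ∨ b = u ∨ a = v ∨ b = v) →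
      wArc A X Y a b = 0

/-- A trajectory of a single token along a reconfiguration sequence. -/
def IsTrajectory [DecidableEq V] (A : V → V → Prop) {ℓ : ℕ}
    (f : Fin (ℓ + 1) → Finset V) (g : Fin (ℓ + 1) → V) : Prop :=
  (∀ i, g i ∈ f i) ∧ ∀ i : Fin ℓ,
    g i.succ = g i.castSucc ∨
      (f i.castSucc \ f i.succ = {g i.castSucc} ∧ f i.succ \ f i.castSucc = {g i.succ})

/-- Number of steps of a reconfiguration sequence sliding a token from `u` to `v`. -/
noncomputable def movesAlong [DecidableEq V] {ℓ : ℕ} (f : Fin (ℓ + 1) → Finset V)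
    (u v : V) : ℕ :=
  (Finset.univ.filter fun i : Fin ℓ =>
    f i.castSucc \ f i.succ = {u} ∧ f i.succ \ f i.castSucc = {v}).card

/-- Number of forward arc traversals of a walk with vertex list `l`. -/
noncomputable def fwdCount (A : V → V → Prop) (l : List V) : ℕ :=
  (l.zip l.tail).countP fun p => decide (A p.1 p.2)

/-- Number of reverse arc traversals of a walk with vertex list `l`. -/
noncomputable def revCount (A : V → V → Prop) (l : List V) : ℕ :=
  (l.zip l.tail).countP fun p => decide (A p.2 p.1)

/-- Number of traversals of the ordered pair `(a, b)` by a walk with vertex list `l`. -/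
def traverseCount [DecidableEq V] (l : List V) (a b : V) : ℕ :=
  (l.zip l.tail).count (a, b)

/-- A vertex `v` touches a directed path `p` if `N[v]` meets the vertex set of `p`. -/
def Touches (A : V → V → Prop) (v : V) (p : DirPath A) : Prop :=
  ∃ u, p.mem u ∧ (u = v ∨ (underlying A).Adj v u)

/-- Independence in an undirected graph (for undirected token sliding). -/
def UIndep (G : SimpleGraph V) (I : Finset V) : Prop :=
  ∀ u ∈ I, ∀ v ∈ I, ¬ G.Adj u v

/-- One undirected token-sliding step along an edge. -/
def UIsStep [DecidableEq V] (G : SimpleGraph V) (I J : Finset V) : Prop :=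
  ∃ u v, G.Adj u v ∧ I \ J = {u} ∧ J \ I = {v}

/-- Reconfigurability under (undirected) token sliding. -/
def UReconfigurable [DecidableEq V] (G : SimpleGraph V) (I J : Finset V) : Prop :=
  ∃ (ℓ : ℕ) (f : Fin (ℓ + 1) → Finset V),
    (∀ i, UIndep G (f i)) ∧ (∀ i : Fin ℓ, UIsStep G (f i.castSucc) (f i.succ)) ∧
    f 0 = I ∧ f (Fin.last ℓ) = J

/-- The oriented graph `G'` of the reduction: two copies `(v, false) = v₁` and
`(v, true) = v₂` of each vertex, arcs `(v₁, v₂)`, and for each edge of `G`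
oriented as `D u v` the arcs `(u₁,v₁), (u₂,v₂), (v₁,u₂), (v₂,u₁)`. -/
def A14 {V : Type*} (D : V → V → Prop) (p q : V × Bool) : Prop :=
  (p.1 = q.1 ∧ p.2 = false ∧ q.2 = true) ∨
  (D p.1 q.1 ∧ p.2 = q.2) ∨ (D q.1 p.1 ∧ p.2 ≠ q.2)


section AuxStmt14

lemma seq_iff_rtg {β : Type*} (P : β → Prop) (S : β → β → Prop) (I J : β) :
    (∃ (ℓ : ℕ) (f : Fin (ℓ + 1) → β),
      ((∀ i, P (f i)) ∧ ∀ i : Fin ℓ, S (f i.castSucc) (f i.succ)) ∧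
      f 0 = I ∧ f (Fin.last ℓ) = J) ↔
    P I ∧ Relation.ReflTransGen (fun X Y => P Y ∧ S X Y) I J := by
  constructor
  · rintro ⟨ℓ, f, ⟨hP, hS⟩, h0, hl⟩
    subst h0; subst hl
    refine ⟨hP 0, ?_⟩
    have key : ∀ i : Fin (ℓ + 1),
        Relation.ReflTransGen (fun X Y => P Y ∧ S X Y) (f 0) (f i) := by
      intro i
      induction i using Fin.induction with
      | zero => exact Relation.ReflTransGen.refl
      | succ j ih => exact ih.tail ⟨hP j.succ, hS j⟩
    exact key (Fin.last ℓ)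
  · rintro ⟨hPI, h⟩
    induction h with
    | refl => exact ⟨0, fun _ => I, ⟨fun _ => hPI, fun i => i.elim0⟩, rfl, rfl⟩
    | @tail b c hab hbc ih =>
      obtain ⟨ℓ, f, ⟨hP, hS⟩, h0, hl⟩ := ih
      refine ⟨ℓ + 1, Fin.snoc f c, ⟨?_, ?_⟩, ?_, ?_⟩
      · intro i
        induction i using Fin.lastCases with
        | last => simpa using hbc.1
        | cast j => simpa using hP j
      · intro i
        induction i using Fin.lastCases with
        | last =>
          rw [show (Fin.last ℓ).succ = Fin.last (ℓ + 1) from rfl]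
          simpa [hl] using hbc.2
        | cast j =>
          rw [Fin.succ_castSucc]
          rw [Fin.snoc_castSucc, Fin.snoc_castSucc]
          exact hS j
      · rw [show (0 : Fin (ℓ + 2)) = (0 : Fin (ℓ+1)).castSucc from (Fin.castSucc_zero).symm,
          Fin.snoc_castSucc]
        exact h0
      · simp

variable {V : Type*}

lemma adj_A14 {G : SimpleGraph V} {D : V → V → Prop}
    (hD1 : ∀ u v, D u v → G.Adj u v) (hD2 : ∀ u v, G.Adj u v → D u v ∨ D v u)
    (p q : V × Bool) :
    (underlying (A14 D)).Adj p q ↔ (p.1 = q.1 ∧ p.2 ≠ q.2) ∨ G.Adj p.1 q.1 := by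
  obtain ⟨u, b⟩ := p
  obtain ⟨v, c⟩ := q
  rw [underlying, SimpleGraph.fromRel_adj]
  constructor
  · rintro ⟨hne, h | h⟩
    · rcases h with ⟨h1, h2, h3⟩ | ⟨h1, h2⟩ | ⟨h1, h2⟩
      · exact Or.inl ⟨h1, by simp_all⟩
      · exact Or.inr (hD1 _ _ h1)
      · exact Or.inr (hD1 _ _ h1).symm
    · rcases h with ⟨h1, h2, h3⟩ | ⟨h1, h2⟩ | ⟨h1, h2⟩
      · exact Or.inl ⟨h1.symm, by simp_all⟩
      · exact Or.inr (hD1 _ _ h1).symm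
      · exact Or.inr (hD1 _ _ h1)
  · rintro (⟨h1, h2⟩ | hadj)
    · subst h1
      refine ⟨by simpa using h2, ?_⟩
      simp only [A14]
      rcases b with _ | _ <;> rcases c with _ | _ <;> simp_all
    · have hne : u ≠ v := hadj.ne
      refine ⟨by simp [hne], ?_⟩
      rcases hD2 u v hadj with hd | hd <;> by_cases hbc : b = c <;>
        simp only [A14] <;> subst_eqs <;> tauto

lemma uindep_image_false [DecidableEq V] {G : SimpleGraph V} {D : V → V → Prop}
    (hD1 : ∀ u v, D u v → G.Adj u v) (hD2 : ∀ u v, G.Adj u v → D u v ∨ D v u)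
    {X : Finset V} (hX : UIndep G X) :
    IndepF (A14 D) (X.image fun v => (v, false)) := by
  intro p hp q hq hadj
  simp only [Finset.mem_image] at hp hq
  obtain ⟨x, hx, rfl⟩ := hp
  obtain ⟨y, hy, rfl⟩ := hq
  rcases (adj_A14 hD1 hD2 _ _).1 hadj with ⟨_, h2⟩ | h
  · exact h2 rfl
  · exact hX x hx y hy h

lemma indepF_inj_fst {D : V → V → Prop} {G : SimpleGraph V}
    (hD1 : ∀ u v, D u v → G.Adj u v) (hD2 : ∀ u v, G.Adj u v → D u v ∨ D v u)
    {J : Finset (V × Bool)} (hJ : IndepF (A14 D) J)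
    {p q : V × Bool} (hp : p ∈ J) (hq : q ∈ J) (h : p.1 = q.1) : p = q := by
  by_contra hne
  have h2 : p.2 ≠ q.2 := by
    intro h2
    exact hne (Prod.ext h h2)
  exact hJ p hp q hq ((adj_A14 hD1 hD2 p q).2 (Or.inl ⟨h, h2⟩))

lemma proj_uindep [DecidableEq V] {D : V → V → Prop} {G : SimpleGraph V}
    (hD1 : ∀ u v, D u v → G.Adj u v) (hD2 : ∀ u v, G.Adj u v → D u v ∨ D v u)
    {J : Finset (V × Bool)} (hJ : IndepF (A14 D) J) :
    UIndep G (J.image Prod.fst) := by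
  intro u hu v hv hadj
  simp only [Finset.mem_image] at hu hv
  obtain ⟨p, hp, rfl⟩ := hu
  obtain ⟨q, hq, rfl⟩ := hv
  exact hJ p hp q hq ((adj_A14 hD1 hD2 p q).2 (Or.inr hadj))

lemma step_decomp {α : Type*} [DecidableEq α] {I J : Finset α} {u v : α}
    (h1 : I \ J = {u}) (h2 : J \ I = {v}) :
    u ∈ I ∧ u ∉ J ∧ v ∈ J ∧ v ∉ I ∧ u ≠ v ∧ J = insert v (I.erase u) := by
  have h1' : ∀ x, x ∈ I ∧ x ∉ J ↔ x = u := fun x => by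
    rw [← Finset.mem_sdiff, h1, Finset.mem_singleton]
  have h2' : ∀ x, x ∈ J ∧ x ∉ I ↔ x = v := fun x => by
    rw [← Finset.mem_sdiff, h2, Finset.mem_singleton]
  have hu := (h1' u).2 rfl
  have hv := (h2' v).2 rfl
  refine ⟨hu.1, hu.2, hv.1, hv.2, ?_, ?_⟩
  · rintro rfl; exact hv.2 hu.1
  · ext x
    simp only [Finset.mem_insert, Finset.mem_erase]
    constructor
    · intro hx
      by_cases hxI : x ∈ I
      · right
        refine ⟨?_, hxI⟩
        rintro rfl; exact hu.2 hx
      · exact Or.inl ((h2' x).1 ⟨hx, hxI⟩)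
    · rintro (rfl | ⟨hxu, hxI⟩)
      · exact hv.1
      · by_contra hxJ
        exact hxu ((h1' x).1 ⟨hxI, hxJ⟩)

lemma step_comp {α : Type*} [DecidableEq α] {I : Finset α} {u v : α}
    (hu : u ∈ I) (hv : v ∉ I) (huv : u ≠ v) :
    I \ insert v (I.erase u) = {u} ∧ insert v (I.erase u) \ I = {v} := by
  have huv' : v ≠ u := huv.symm
  constructor <;> ext x <;>
    by_cases h1 : x = u <;> by_cases h2 : x = v <;>
      simp_all [Finset.mem_sdiff, Finset.mem_insert, Finset.mem_erase] <;> tauto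

lemma fwd_step {V : Type*} [DecidableEq V] {G : SimpleGraph V} {D : V → V → Prop}
    (hD1 : ∀ u v, D u v → G.Adj u v) (hD2 : ∀ u v, G.Adj u v → D u v ∨ D v u)
    {X Y : Finset V} (hX : UIndep G X) (hY : UIndep G Y) (hs : UIsStep G X Y) :
    Relation.ReflTransGen
      (fun A B => IndepF (A14 D) B ∧ IsStep (A14 D) A B)
      (X.image fun v => (v, false)) (Y.image fun v => (v, false)) := by
  obtain ⟨u, v, hadj, h1, h2⟩ := hs
  obtain ⟨huX, huY, hvY, hvX, huv, hYeq⟩ := step_decomp h1 h2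
  have hf : Function.Injective (fun v : V => (v, false)) := fun a b h => by
    simpa using h
  have hXY : (X.image fun v => (v,false)) \ (Y.image fun v => (v,false))
      = {(u, false)} := by
    rw [← Finset.image_sdiff _ _ hf, h1]; simp
  have hYX : (Y.image fun v => (v,false)) \ (X.image fun v => (v,false))
      = {(v, false)} := by
    rw [← Finset.image_sdiff _ _ hf, h2]; simp
  have hIY : IndepF (A14 D) (Y.image fun v => (v, false)) :=
    uindep_image_false hD1 hD2 hY
  rcases hD2 u v hadj with hd | hd
  · exact Relation.ReflTransGen.single
      ⟨hIY, (u, false), (v, false), Or.inr (Or.inl ⟨hd, rfl⟩), hXY, hYX⟩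
  · set JX := X.image fun v => (v, false) with hJX
    set JY := Y.image fun v => (v, false) with hJY
    have hu1 : (u, false) ∈ JX := Finset.mem_image_of_mem _ huX
    have hu2 : (u, true) ∉ JX := by
      simp [hJX, Finset.mem_image]
    have hK := step_comp hu1 hu2 (by simp)
    set K := insert (u, true) (JX.erase (u, false)) with hKdef
    have hKmem : ∀ p ∈ K, p.1 ∈ X ∧ (p = (u, true) ∨ (p.2 = false ∧ p.1 ≠ u)) := by
      intro p hp
      rw [hKdef, Finset.mem_insert, Finset.mem_erase] at hp
      rcases hp with rfl | ⟨hne, hp⟩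
      · exact ⟨huX, Or.inl rfl⟩
      · simp only [hJX, Finset.mem_image] at hp
        obtain ⟨x, hx, rfl⟩ := hp
        refine ⟨hx, Or.inr ⟨rfl, ?_⟩⟩
        intro h
        exact hne (Prod.ext h rfl)
    have hKindep : IndepF (A14 D) K := by
      intro p hp q hq hadj'
      obtain ⟨hpX, hpc⟩ := hKmem p hp
      obtain ⟨hqX, hqc⟩ := hKmem q hq
      rcases (adj_A14 hD1 hD2 p q).1 hadj' with ⟨he, hne⟩ | hG
      · rcases hpc with rfl | ⟨hp2, hp1⟩ <;> rcases hqc with rfl | ⟨hq2, hq1⟩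
        · exact hne rfl
        · exact hq1 he.symm
        · exact hp1 he
        · rw [hp2, hq2] at hne; exact hne rfl
      · exact hX p.1 hpX q.1 hqX hG
    have step1 : IndepF (A14 D) K ∧ IsStep (A14 D) JX K :=
      ⟨hKindep, (u, false), (u, true), Or.inl ⟨rfl, rfl, rfl⟩, hK.1, hK.2⟩
    have hv1K : (v, false) ∉ K := by
      intro h
      exact hvX (hKmem _ h).1
    have hu2K : (u, true) ∈ K := Finset.mem_insert_self _ _
    have hJYK : JY = insert (v, false) (K.erase (u, true)) := by
      rw [hKdef, Finset.erase_insert (fun h => hu2 (Finset.mem_of_mem_erase h))]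
      rw [hJY, hYeq, Finset.image_insert, Finset.image_erase hf, ← hJX]
    have hK2 := step_comp hu2K hv1K (by simp)
    have step2 : IndepF (A14 D) JY ∧ IsStep (A14 D) K JY :=
      ⟨hIY, (u, true), (v, false), Or.inr (Or.inr ⟨hd, by simp⟩),
        by rw [hJYK]; exact hK2.1, by rw [hJYK]; exact hK2.2⟩
    have r1 : Relation.ReflTransGen
        (fun A B => IndepF (A14 D) B ∧ IsStep (A14 D) A B) JX K :=
      Relation.ReflTransGen.single step1
    have r2 : Relation.ReflTransGen
        (fun A B => IndepF (A14 D) B ∧ IsStep (A14 D) A B) K JY :=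
      Relation.ReflTransGen.single step2
    exact r1.trans r2

lemma bwd_step {V : Type*} [DecidableEq V] {G : SimpleGraph V} {D : V → V → Prop}
    (hD1 : ∀ u v, D u v → G.Adj u v) (hD2 : ∀ u v, G.Adj u v → D u v ∨ D v u)
    {X' Y' : Finset (V × Bool)} (hX : IndepF (A14 D) X') (hY : IndepF (A14 D) Y')
    (hs : IsStep (A14 D) X' Y') :
    X'.image Prod.fst = Y'.image Prod.fst ∨
      UIsStep G (X'.image Prod.fst) (Y'.image Prod.fst) := by
  obtain ⟨p, q, harc, h1, h2⟩ := hs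
  obtain ⟨hpX, hpY, hqY, hqX, hpq, hYeq⟩ := step_decomp h1 h2
  have hproj : (X'.erase p).image Prod.fst = (X'.image Prod.fst).erase p.1 := by
    ext x
    simp only [Finset.mem_image, Finset.mem_erase]
    constructor
    · rintro ⟨r, ⟨hrp, hr⟩, rfl⟩
      exact ⟨fun h => hrp (indepF_inj_fst hD1 hD2 hX hr hpX h), r, hr, rfl⟩
    · rintro ⟨hx, r, hr, rfl⟩
      exact ⟨r, ⟨fun h => hx (by rw [h]), hr⟩, rfl⟩
  have hYproj : Y'.image Prod.fst = insert q.1 ((X'.image Prod.fst).erase p.1) := by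
    rw [hYeq, Finset.image_insert, hproj]
  by_cases hcase : p.1 = q.1
  · left
    rw [hYproj, ← hcase, Finset.insert_erase (Finset.mem_image_of_mem _ hpX)]
  · have hadj : G.Adj p.1 q.1 := by
      rcases harc with ⟨he, _⟩ | ⟨hd, _⟩ | ⟨hd, _⟩
      · exact absurd he hcase
      · exact hD1 _ _ hd
      · exact (hD1 _ _ hd).symm
    right
    have hq1 : q.1 ∉ X'.image Prod.fst := by
      intro h
      simp only [Finset.mem_image] at h
      obtain ⟨r, hr, hre⟩ := h
      have hrp : r ≠ p := by
        rintro rfl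
        exact hcase hre
      have hrY : r ∈ Y' := by
        rw [hYeq]
        exact Finset.mem_insert_of_mem (Finset.mem_erase.2 ⟨hrp, hr⟩)
      have hrq : r = q := indepF_inj_fst hD1 hD2 hY hrY hqY hre
      subst hrq
      exact hqX hr
    have hsc := step_comp (Finset.mem_image_of_mem Prod.fst hpX) hq1 hcase
    exact ⟨p.1, q.1, hadj, by rw [hYproj]; exact hsc.1, by rw [hYproj]; exact hsc.2⟩

end AuxStmt14

/-- Undirected token sliding on `G` is equivalent to directed token
sliding on the oriented graph `G'`, where `D` is any orientation of `G`. -/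
theorem stmt_14 [Fintype V] [DecidableEq V] (G : SimpleGraph V) (D : V → V → Prop)
    (hD1 : ∀ u v, D u v → G.Adj u v)
    (hD2 : ∀ u v, G.Adj u v → D u v ∨ D v u)
    (hD3 : ∀ u v, ¬ (D u v ∧ D v u))
    (I0 It : Finset V) (h0 : UIndep G I0) (ht : UIndep G It)
    (hcard : I0.card = It.card) :
    UReconfigurable G I0 It ↔
      Reconfigurable (A14 D)
        (I0.image fun v => (v, false)) (It.image fun v => (v, false)) := by
  have hff : ∀ X : Finset V, ((X.image fun v => (v, false)).image Prod.fst) = X := by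
    intro X
    ext x
    simp
  constructor
  · rintro ⟨ℓ, f, hI, hS, hf0, hfl⟩
    obtain ⟨-, hrtg⟩ := (seq_iff_rtg (UIndep G) (UIsStep G) I0 It).1
      ⟨ℓ, f, ⟨hI, hS⟩, hf0, hfl⟩
    have key : ∀ J, Relation.ReflTransGen (fun X Y => UIndep G Y ∧ UIsStep G X Y) I0 J →
        UIndep G J ∧ Relation.ReflTransGen
          (fun X Y => IndepF (A14 D) Y ∧ IsStep (A14 D) X Y)
          (I0.image fun v => (v, false)) (J.image fun v => (v, false)) := by
      intro J h
      induction h with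
      | refl => exact ⟨h0, Relation.ReflTransGen.refl⟩
      | tail hab hbc ih =>
        exact ⟨hbc.1, ih.2.trans (fwd_step hD1 hD2 ih.1 hbc.1 hbc.2)⟩
    obtain ⟨ℓ', f', ⟨hI', hS'⟩, h0', hl'⟩ :=
      (seq_iff_rtg (IndepF (A14 D)) (IsStep (A14 D)) _ _).2
        ⟨uindep_image_false hD1 hD2 h0, (key It hrtg).2⟩
    exact ⟨ℓ', f', ⟨hI', hS'⟩, h0', hl'⟩
  · rintro ⟨ℓ, f, ⟨hI, hS⟩, hf0, hfl⟩
    obtain ⟨-, hrtg⟩ := (seq_iff_rtg (IndepF (A14 D)) (IsStep (A14 D)) _ _).1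
      ⟨ℓ, f, ⟨hI, hS⟩, hf0, hfl⟩
    have key : ∀ J' : Finset (V × Bool), Relation.ReflTransGen
        (fun X Y => IndepF (A14 D) Y ∧ IsStep (A14 D) X Y)
        (I0.image fun v => (v, false)) J' →
        IndepF (A14 D) J' ∧ Relation.ReflTransGen
          (fun X Y => UIndep G Y ∧ UIsStep G X Y) I0 (J'.image Prod.fst) := by
      intro J' h
      induction h with
      | refl =>
        refine ⟨uindep_image_false hD1 hD2 h0, ?_⟩
        rw [hff]
      | tail hab hbc ih =>
        refine ⟨hbc.1, ?_⟩
        rcases bwd_step hD1 hD2 ih.1 hbc.1 hbc.2 with heq | hstep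
        · rw [← heq]
          exact ih.2
        · exact ih.2.tail ⟨proj_uindep hD1 hD2 hbc.1, hstep⟩
    have hres := (key _ hrtg).2
    rw [hff] at hres
    obtain ⟨ℓ', f', ⟨hI', hS'⟩, h0', hl'⟩ :=
      (seq_iff_rtg (UIndep G) (UIsStep G) I0 It).2 ⟨h0, hres⟩
    exact ⟨ℓ', f', hI', hS', h0', hl'⟩
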